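/- In the ring R = k[x,y,z,u]/(x²+yz, xy−yu, xz, xu, y²), the ideal quotients ((z) : (x,z)) = (x,z,u) and ((x) : (x,y)) = (x,y,z,u) hold. -/
import Mathlib

open MvPolynomial

set_option synthInstance.maxHeartbeats 1000000
set_option maxHeartbeats 1000000

noncomputable section

/-- The defining ideal `(x²+yz, xy−yu, xz, xu, y²)` of Conca's ring, with
`x = X 0`, `y = X 1`, `z = X 2`, `u = X 3`. -/
def concaIdeal (k : Type*) [Field k] : Ideal (MvPolynomial (Fin 4) k) :=
  Ideal.span {X 0 ^ 2 + X 1 * X 2, X 0 * X 1 - X 1 * X 3, X 0 * X 2, X 0 * X 3, X 1 ^ 2}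

/-- The ring `R = k[x,y,z,u]/(x²+yz, xy−yu, xz, xu, y²)`. -/
abbrev ConcaRing (k : Type*) [Field k] := MvPolynomial (Fin 4) k ⧸ concaIdeal k

/-- The residue classes of the variables `x, y, z, u` in `R`. -/
def cv (k : Type*) [Field k] (i : Fin 4) : ConcaRing k :=
  Ideal.Quotient.mk (concaIdeal k) (X i)

section Aux

variable {k : Type*} [Field k]

private lemma span_vanish {S : Set (MvPolynomial (Fin 4) k)} (L : MvPolynomial (Fin 4) k →ₗ[k] k)
    (hg : ∀ g ∈ S, ∀ r, L (r * g) = 0) : ∀ x ∈ Ideal.span S, L x = 0 := by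
  have H : ∀ x ∈ Ideal.span S, ∀ r, L (r * x) = 0 := by
    intro x hx
    induction hx using Submodule.span_induction with
    | mem g hgS => exact hg g hgS
    | zero => intro r; simp
    | add a b _ _ ha hb => intro r; rw [mul_add, map_add, ha, hb, add_zero]
    | smul a x _ hx => intro r; rw [smul_eq_mul, ← mul_assoc]; exact hx _
  intro x hx
  simpa using H x hx 1

private lemma monomial_mem_of_X {m : Fin 4 →₀ ℕ} (c : k) {i : Fin 4} (h : m i ≠ 0)
    {S : Set (MvPolynomial (Fin 4) k)} (hX : (X i : MvPolynomial (Fin 4) k) ∈ Ideal.span S) :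
    (monomial m c : MvPolynomial (Fin 4) k) ∈ Ideal.span S := by
  have hle : Finsupp.single i 1 ≤ m := by rw [Finsupp.single_le_iff]; omega
  have : (monomial m c : MvPolynomial (Fin 4) k) = monomial (m - Finsupp.single i 1) c * X i := by
    rw [X, monomial_mul, mul_one, tsub_add_cancel_of_le hle]
  rw [this]; exact Ideal.mul_mem_left _ _ hX

private lemma mem_M1 (p : MvPolynomial (Fin 4) k) (h0 : coeff 0 p = 0)
    (h1 : coeff (Finsupp.single 1 1) p = 0) :
    p ∈ Ideal.span {X 0, X 2, X 3, (X 1 : MvPolynomial (Fin 4) k) ^ 2} := by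
  rw [p.as_sum]
  apply Submodule.sum_mem
  intro m hm
  rw [MvPolynomial.mem_support_iff] at hm
  by_cases hm0 : m 0 ≠ 0
  · exact monomial_mem_of_X _ hm0 (Ideal.subset_span (by simp))
  by_cases hm2 : m 2 ≠ 0
  · exact monomial_mem_of_X _ hm2 (Ideal.subset_span (by simp))
  by_cases hm3 : m 3 ≠ 0
  · exact monomial_mem_of_X _ hm3 (Ideal.subset_span (by simp))
  push_neg at hm0 hm2 hm3
  have hne : m ≠ 0 := by rintro rfl; exact hm h0
  have hne1 : m ≠ Finsupp.single 1 1 := by rintro rfl; exact hm h1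
  have hm1 : 2 ≤ m 1 := by
    rcases Nat.lt_or_ge (m 1) 2 with h | h
    · exfalso
      interval_cases h' : (m 1)
      · apply hne; ext j; fin_cases j <;> simp_all
      · apply hne1; ext j; fin_cases j <;> simp_all [Finsupp.single_apply]
    · exact h
  have hle : Finsupp.single 1 2 ≤ m := by rw [Finsupp.single_le_iff]; omega
  have : (monomial m (coeff m p) : MvPolynomial (Fin 4) k)
      = monomial (m - Finsupp.single 1 2) (coeff m p) * X 1 ^ 2 := by
    rw [X_pow_eq_monomial, monomial_mul, mul_one, tsub_add_cancel_of_le hle]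
  rw [this]
  exact Ideal.mul_mem_left _ _ (Ideal.subset_span (by simp))

private lemma mem_M2 (p : MvPolynomial (Fin 4) k) (h0 : coeff 0 p = 0) :
    p ∈ Ideal.span {X 0, X 1, X 2, (X 3 : MvPolynomial (Fin 4) k)} := by
  rw [p.as_sum]
  apply Submodule.sum_mem
  intro m hm
  rw [MvPolynomial.mem_support_iff] at hm
  by_cases hm0 : m 0 ≠ 0
  · exact monomial_mem_of_X _ hm0 (Ideal.subset_span (by simp))
  by_cases hm1 : m 1 ≠ 0
  · exact monomial_mem_of_X _ hm1 (Ideal.subset_span (by simp))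
  by_cases hm2 : m 2 ≠ 0
  · exact monomial_mem_of_X _ hm2 (Ideal.subset_span (by simp))
  by_cases hm3 : m 3 ≠ 0
  · exact monomial_mem_of_X _ hm3 (Ideal.subset_span (by simp))
  push_neg at hm0 hm1 hm2 hm3
  exfalso
  apply hm
  have : m = 0 := by ext j; fin_cases j <;> simp_all
  rw [this]; exact h0

private lemma quot_mem_iff (S : Set (MvPolynomial (Fin 4) k)) (p : MvPolynomial (Fin 4) k) :
    Ideal.Quotient.mk (concaIdeal k) p ∈
      Ideal.span ((Ideal.Quotient.mk (concaIdeal k)) '' S) ↔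
    p ∈ Ideal.span (S ∪ {X 0 ^ 2 + X 1 * X 2, X 0 * X 1 - X 1 * X 3,
      X 0 * X 2, X 0 * X 3, X 1 ^ 2}) := by
  rw [← Ideal.map_span, Ideal.mem_quotient_iff_mem_sup, concaIdeal, ← Ideal.span_union]

private lemma colon_ge_helper {N : Ideal (ConcaRing k)} {S : Set (ConcaRing k)} {g : ConcaRing k}
    (h : ∀ s ∈ S, g * s ∈ N) : g ∈ Submodule.colon N (Ideal.span S) := by
  rw [Submodule.mem_colon]
  intro q hq
  induction hq using Submodule.span_induction with
  | mem s hs => exact h s hs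
  | zero => simp
  | add a b _ _ ha hb => rw [smul_add]; exact add_mem ha hb
  | smul a q _ hq => rw [smul_comm]; exact Submodule.smul_mem _ _ hq

end Aux

theorem stmt_3 (k : Type*) [Field k] :
    Submodule.colon (Ideal.span {cv k 2}) (Ideal.span {cv k 0, cv k 2}) =
      Ideal.span {cv k 0, cv k 2, cv k 3} ∧
    Submodule.colon (Ideal.span {cv k 0}) (Ideal.span {cv k 0, cv k 1}) =
      Ideal.span {cv k 0, cv k 1, cv k 2, cv k 3} := by
  have himg2 : ({cv k 2} : Set (ConcaRing k)) = (Ideal.Quotient.mk (concaIdeal k)) '' {X 2} := by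
    simp [cv]
  have himg023 : ({cv k 0, cv k 2, cv k 3} : Set (ConcaRing k))
      = (Ideal.Quotient.mk (concaIdeal k)) '' {X 0, X 2, X 3} := by
    simp [cv, Set.image_insert_eq]
  have himg0 : ({cv k 0} : Set (ConcaRing k)) = (Ideal.Quotient.mk (concaIdeal k)) '' {X 0} := by
    simp [cv]
  have himg0123 : ({cv k 0, cv k 1, cv k 2, cv k 3} : Set (ConcaRing k))
      = (Ideal.Quotient.mk (concaIdeal k)) '' {X 0, X 1, X 2, X 3} := by
    simp [cv, Set.image_insert_eq]
  constructor
  · apply le_antisymm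
    · -- hard direction: colon ⊆ (x,z,u)
      intro r hr
      obtain ⟨p, rfl⟩ := Ideal.Quotient.mk_surjective r
      have hx : Ideal.Quotient.mk (concaIdeal k) (p * X 0) ∈ Ideal.span {cv k 2} := by
        rw [map_mul]
        exact Submodule.mem_colon.mp hr (cv k 0)
          (Ideal.subset_span (by simp))
      rw [himg2, quot_mem_iff] at hx
      rw [himg023, quot_mem_iff]
      -- extract coefficient facts from hx
      set S1 : Set (MvPolynomial (Fin 4) k) := {X 2} ∪ {X 0 ^ 2 + X 1 * X 2,
        X 0 * X 1 - X 1 * X 3, X 0 * X 2, X 0 * X 3, X 1 ^ 2} with hS1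
      have h0 : coeff 0 p = 0 := by
        have := span_vanish (lcoeff k (Finsupp.single 0 1)) ?_ _ hx
        · simpa [lcoeff_apply, coeff_mul_X', Finsupp.mem_support_iff,
            Finsupp.single_apply] using this
        · intro g hg r
          simp only [hS1, Set.union_insert, Set.union_singleton, Set.mem_insert_iff,
            Set.mem_singleton_iff] at hg
          rcases hg with rfl | rfl | rfl | rfl | rfl | rfl <;>
            simp [lcoeff_apply, pow_two, mul_add, mul_sub, ← mul_assoc, coeff_mul_X',
              Finsupp.mem_support_iff, Finsupp.single_apply]
      have h1 : coeff (Finsupp.single 1 1) p = 0 := by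
        have := span_vanish (lcoeff k (Finsupp.single 0 1 + Finsupp.single 1 1)
            + lcoeff k (Finsupp.single 1 1 + Finsupp.single 3 1)) ?_ _ hx
        · simpa [lcoeff_apply, coeff_mul_X', Finsupp.mem_support_iff,
            Finsupp.single_apply, Finsupp.add_apply] using this
        · intro g hg r
          simp only [hS1, Set.union_insert, Set.union_singleton, Set.mem_insert_iff,
            Set.mem_singleton_iff] at hg
          rcases hg with rfl | rfl | rfl | rfl | rfl | rfl <;>
            simp [lcoeff_apply, pow_two, mul_add, mul_sub, ← mul_assoc, coeff_mul_X',
              Finsupp.mem_support_iff, Finsupp.single_apply, Finsupp.add_apply]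
      refine Ideal.span_mono ?_ (mem_M1 p h0 h1)
      intro t ht
      simp only [Set.mem_insert_iff, Set.mem_singleton_iff] at ht
      rcases ht with rfl | rfl | rfl | rfl <;> simp
    · -- easy direction
      rw [Ideal.span_le]
      have key : ∀ i j : Fin 4,
          (X i * X j : MvPolynomial (Fin 4) k) ∈ Ideal.span ({X 2} ∪ {X 0 ^ 2 + X 1 * X 2,
            X 0 * X 1 - X 1 * X 3, X 0 * X 2, X 0 * X 3, X 1 ^ 2}) →
          cv k i * cv k j ∈ Ideal.span {cv k 2} := by
        intro i j h
        have : cv k i * cv k j = Ideal.Quotient.mk (concaIdeal k) (X i * X j) := by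
          simp [cv]
        rw [this, himg2, quot_mem_iff]
        exact h
      intro g hg
      simp only [Set.mem_insert_iff, Set.mem_singleton_iff] at hg
      rcases hg with rfl | rfl | rfl
      · -- g = x
        apply colon_ge_helper
        intro s hs
        simp only [Set.mem_insert_iff, Set.mem_singleton_iff] at hs
        rcases hs with rfl | rfl
        · apply key 0 0
          have : (X 0 * X 0 : MvPolynomial (Fin 4) k)
              = (X 0 ^ 2 + X 1 * X 2) - X 1 * X 2 := by ring
          rw [this]
          exact sub_mem (Ideal.subset_span (by simp))
            (Ideal.mul_mem_left _ _ (Ideal.subset_span (by simp)))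
        · exact key 0 2 (Ideal.subset_span (by simp))
      · -- g = z
        apply colon_ge_helper
        intro s hs
        simp only [Set.mem_insert_iff, Set.mem_singleton_iff] at hs
        rcases hs with rfl | rfl
        · apply key 2 0
          have : (X 2 * X 0 : MvPolynomial (Fin 4) k) = X 0 * X 2 := by ring
          rw [this]; exact Ideal.subset_span (by simp)
        · apply key 2 2
          exact Ideal.mul_mem_right _ _ (Ideal.subset_span (by simp))
      · -- g = u
        apply colon_ge_helper
        intro s hs
        simp only [Set.mem_insert_iff, Set.mem_singleton_iff] at hs
        rcases hs with rfl | rfl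
        · apply key 3 0
          have : (X 3 * X 0 : MvPolynomial (Fin 4) k) = X 0 * X 3 := by ring
          rw [this]; exact Ideal.subset_span (by simp)
        · apply key 3 2
          exact Ideal.mul_mem_left _ _ (Ideal.subset_span (by simp))
  · apply le_antisymm
    · intro r hr
      obtain ⟨p, rfl⟩ := Ideal.Quotient.mk_surjective r
      have hy : Ideal.Quotient.mk (concaIdeal k) (p * X 1) ∈ Ideal.span {cv k 0} := by
        rw [map_mul]
        exact Submodule.mem_colon.mp hr (cv k 1) (Ideal.subset_span (by simp))
      rw [himg0, quot_mem_iff] at hy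
      rw [himg0123, quot_mem_iff]
      have h0 : coeff 0 p = 0 := by
        have := span_vanish (lcoeff k (Finsupp.single 1 1)) ?_ _ hy
        · simpa [lcoeff_apply, coeff_mul_X', Finsupp.mem_support_iff,
            Finsupp.single_apply] using this
        · intro g hg r
          simp only [Set.union_insert, Set.union_singleton, Set.mem_insert_iff,
            Set.mem_singleton_iff] at hg
          rcases hg with rfl | rfl | rfl | rfl | rfl | rfl <;>
            simp [lcoeff_apply, pow_two, mul_add, mul_sub, ← mul_assoc, coeff_mul_X',
              Finsupp.mem_support_iff, Finsupp.single_apply]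
      refine Ideal.span_mono ?_ (mem_M2 p h0)
      intro t ht
      simp only [Set.mem_insert_iff, Set.mem_singleton_iff] at ht
      rcases ht with rfl | rfl | rfl | rfl <;> simp
    · rw [Ideal.span_le]
      have key : ∀ i j : Fin 4,
          (X i * X j : MvPolynomial (Fin 4) k) ∈ Ideal.span ({X 0} ∪ {X 0 ^ 2 + X 1 * X 2,
            X 0 * X 1 - X 1 * X 3, X 0 * X 2, X 0 * X 3, X 1 ^ 2}) →
          cv k i * cv k j ∈ Ideal.span {cv k 0} := by
        intro i j h
        have : cv k i * cv k j = Ideal.Quotient.mk (concaIdeal k) (X i * X j) := by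
          simp [cv]
        rw [this, himg0, quot_mem_iff]
        exact h
      have hX0mem : ∀ i : Fin 4, (X i * X 0 : MvPolynomial (Fin 4) k) ∈
          Ideal.span ({X 0} ∪ {X 0 ^ 2 + X 1 * X 2,
            X 0 * X 1 - X 1 * X 3, X 0 * X 2, X 0 * X 3, X 1 ^ 2}) := by
        intro i
        exact Ideal.mul_mem_left _ _ (Ideal.subset_span (by simp))
      intro g hg
      simp only [Set.mem_insert_iff, Set.mem_singleton_iff] at hg
      rcases hg with rfl | rfl | rfl | rfl
      · apply colon_ge_helper
        intro s hs
        simp only [Set.mem_insert_iff, Set.mem_singleton_iff] at hs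
        rcases hs with rfl | rfl
        · exact key 0 0 (hX0mem 0)
        · apply key 0 1
          have := hX0mem 1
          rwa [show (X 1 * X 0 : MvPolynomial (Fin 4) k) = X 0 * X 1 from by ring] at this
      · apply colon_ge_helper
        intro s hs
        simp only [Set.mem_insert_iff, Set.mem_singleton_iff] at hs
        rcases hs with rfl | rfl
        · exact key 1 0 (hX0mem 1)
        · apply key 1 1
          have : (X 1 * X 1 : MvPolynomial (Fin 4) k) = X 1 ^ 2 := by ring
          rw [this]; exact Ideal.subset_span (by simp)
      · apply colon_ge_helper
        intro s hs
        simp only [Set.mem_insert_iff, Set.mem_singleton_iff] at hs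
        rcases hs with rfl | rfl
        · exact key 2 0 (hX0mem 2)
        · apply key 2 1
          have : (X 2 * X 1 : MvPolynomial (Fin 4) k)
              = (X 0 ^ 2 + X 1 * X 2) - X 0 * X 0 := by ring
          rw [this]
          exact sub_mem (Ideal.subset_span (by simp)) (hX0mem 0)
      · apply colon_ge_helper
        intro s hs
        simp only [Set.mem_insert_iff, Set.mem_singleton_iff] at hs
        rcases hs with rfl | rfl
        · exact key 3 0 (hX0mem 3)
        · apply key 3 1
          have : (X 3 * X 1 : MvPolynomial (Fin 4) k)
              = X 1 * X 0 - (X 0 * X 1 - X 1 * X 3) := by ring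
          rw [this]
          exact sub_mem (hX0mem 1) (Ideal.subset_span (by simp))
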